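/- Let K be a complete discrete valuation field of equal characteristic p > 0, t ∈ K with v_K(t) = -1, R a positive integer prime to p, and q a power of p. Let K_R = K(T) where T satisfies T^q + T^{q-1} = t^R. Then, setting θ = t^{R/(q-1)}/T in an algebraic closure, θ satisfies the Artin–Schreier equation θ^q - θ = t^{R/(q-1)}; in particular K_R(t^{1/(q-1)}) is separable over K(t^{1/(q-1)}), [K_R : K] = q, and the extension K_R/K has a unique upper ramification break equal to R/(q-1). -/

import Mathlib

open IntermediateField

set_option synthInstance.maxHeartbeats 1000000
set_option maxHeartbeats 1000000

open IntermediateField Polynomial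

section Aux

variable {Ω : Type*} [Field Ω] (v : AddValuation Ω (WithTop ℚ))

lemma aux_nsmul_coe (n : ℕ) (r : ℚ) :
    n • ((r : ℚ) : WithTop ℚ) = (((n : ℚ) * r : ℚ) : WithTop ℚ) := by
  induction n with
  | zero => simp
  | succ n ih =>
      rw [succ_nsmul, ih, ← WithTop.coe_add]
      norm_cast
      push_cast
      ring

lemma aux_vne_top {x : Ω} (hx : x ≠ 0) : v x ≠ ⊤ := v.ne_top_iff.mpr hx

lemma aux_argmin {ι : Type*} [DecidableEq ι] (S : Finset ι) (f : ι → Ω) (hne : S.Nonempty)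
    (hnt : ∀ i ∈ S, v (f i) ≠ ⊤)
    (hdist : ∀ i ∈ S, ∀ j ∈ S, v (f i) = v (f j) → i = j) :
    ∃ i₀ ∈ S, v (∑ i ∈ S, f i) = v (f i₀) ∧ ∀ i ∈ S, v (f i₀) ≤ v (f i) := by
  obtain ⟨i₀, hi₀, hmin⟩ := S.exists_min_image (fun i => v (f i)) hne
  refine ⟨i₀, hi₀, ?_, hmin⟩
  rw [← Finset.add_sum_erase _ _ hi₀]
  exact v.map_add_eq_of_lt_left (v.map_lt_sum (hnt i₀ hi₀) (fun i hi =>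
    lt_of_le_of_ne (hmin i (Finset.mem_of_mem_erase hi))
      (fun h => Finset.ne_of_mem_erase hi (hdist i (Finset.mem_of_mem_erase hi) i₀ hi₀ h.symm))))

lemma aux_sep {F : Type*} [Field F] {p : ℕ} (hp : p.Prime) [CharP F p]
    (k N : ℕ) (hN : 0 < N) (hkq : k + 2 = p ^ N) (c : F) (hc : c ≠ 0) :
    (X ^ (k+2) + X ^ (k+1) - C c : F[X]).Separable := by
  have hq0 : ((k+2 : ℕ) : F) = 0 := by
    rw [hkq, Nat.cast_pow, CharP.cast_eq_zero, zero_pow (by omega)]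
  have hk1 : ((k+1 : ℕ) : F) = -1 := by
    push_cast at hq0 ⊢
    linear_combination hq0
  have hder : derivative (X ^ (k+2) + X ^ (k+1) - C c : F[X]) = -(X ^ k) := by
    rw [derivative_sub, derivative_add, derivative_X_pow, derivative_X_pow, derivative_C]
    rw [show k + 2 - 1 = k + 1 by omega, show k + 1 - 1 = k by omega, hq0, hk1]
    simp
  have h1 : IsCoprime (X ^ (k+2) + X ^ (k+1) - C c : F[X]) X := by
    refine ⟨-C c⁻¹, C c⁻¹ * (X^(k+1) + X^k), ?_⟩
    have hcc : (C c⁻¹ : F[X]) * C c = 1 := by rw [← C_mul, inv_mul_cancel₀ hc, C_1]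
    linear_combination hcc
  rw [Polynomial.separable_def, hder]
  exact (h1.pow_right).neg_right

end Aux

/-- Let `K` be a (complete) discrete valuation field of equal
characteristic `p > 0`, realized as a subfield of a fixed algebraically closed field `Ω`
carrying an additive valuation `v` (with rational values) extending the normalized valuation
of `K` (so `v(K×) = ℤ`), and let `t ∈ K` with `v(t) = -1`.  Let `R` be a positive integer
prime to `p`, `q = p^N` a power of `p`, and `K_R = K(T)` where `T^q + T^{q-1} = t^R`.
Then, for `s = t^{R/(q-1)}` (an element with `s^{q-1} = t^R`), the element `θ = s/T`
satisfies the Artin–Schreier equation `θ^q - θ = s`; `K_R(t^{1/(q-1)})` is separable over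
`K(t^{1/(q-1)})`; `[K_R : K] = q`; and `K_R/K` has a unique upper ramification break equal
to `R/(q-1)` — expressed (for the totally ramified monogenic extension `K_R = K(T)`, with
ramification index `q`, lower break = upper break for a single break) by the condition that
every `K`-embedding `σ ≠ incl` of `K_R` into `Ω` satisfies
`v(σx - x) ≥ (R/(q-1) + 1)/q` on the valuation ring of `K_R`, with equality attained. -/
theorem K_R_artinSchreier_degree_and_unique_break
    (p : ℕ) (hp : p.Prime) (K Ω : Type*) [Field K] [Field Ω] [Algebra K Ω]
    [CharP Ω p] [IsAlgClosed Ω]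
    (v : AddValuation Ω (WithTop ℚ))
    (hvK : ∀ c : K, c ≠ 0 → ∃ z : ℤ, v (algebraMap K Ω c) = ((z : ℚ) : WithTop ℚ))
    (t : K) (hvt : v (algebraMap K Ω t) = ((-1 : ℚ) : WithTop ℚ))
    (R : ℕ) (hR : 0 < R) (hpR : ¬ p ∣ R)
    (N : ℕ) (hN : 0 < N) (q : ℕ) (hq : q = p ^ N)
    (T : Ω) (hT : T ^ q + T ^ (q - 1) = algebraMap K Ω t ^ R) (hT0 : T ≠ 0)
    (s : Ω) (hs : s ^ (q - 1) = algebraMap K Ω t ^ R)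
    (s' : Ω) (hs' : s' ^ (q - 1) = algebraMap K Ω t) :
    -- (1) the Artin–Schreier equation for θ = s/T
    (s / T) ^ q - s / T = s ∧
    -- (2) K_R(t^{1/(q-1)}) is separable over K(t^{1/(q-1)})
    Algebra.IsSeparable (adjoin K {s'}) (adjoin (adjoin K {s'}) {T}) ∧
    -- (3) [K_R : K] = q
    Module.finrank K (adjoin K {T}) = q ∧
    -- (4) unique upper ramification break R/(q-1)
    (∀ σ : (adjoin K {T}) →ₐ[K] Ω, σ ≠ (adjoin K {T}).val →
      (∀ x : adjoin K {T}, (0 : WithTop ℚ) ≤ v (x : Ω) →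
        (((R / (q - 1) + 1) / q : ℚ) : WithTop ℚ) ≤ v (σ x - (x : Ω))) ∧
      (∃ x : adjoin K {T}, (0 : WithTop ℚ) ≤ v (x : Ω) ∧
        v (σ x - (x : Ω)) = (((R / (q - 1) + 1) / q : ℚ) : WithTop ℚ))) := by
  classical
  have hp2 := hp.two_le
  have hq2 : 2 ≤ q := by
    rw [hq]
    calc 2 ≤ p := hp2
    _ ≤ p ^ N := Nat.le_self_pow (by omega) p
  obtain ⟨k, rfl⟩ : ∃ k, q = k + 2 := ⟨q - 2, by omega⟩
  have hqk : k + 2 = p ^ N := hq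
  rw [show k + 2 - 1 = k + 1 by omega] at hT hs hs'
  haveI : Fact p.Prime := ⟨hp⟩
  haveI : CharP K p := (algebraMap K Ω).charP (algebraMap K Ω).injective p
  have ht0 : algebraMap K Ω t ≠ 0 := by
    intro h
    rw [h, v.map_zero] at hvt
    exact (WithTop.coe_ne_top (a := (-1 : ℚ))) hvt.symm
  have htK : t ≠ 0 := fun h => ht0 (by rw [h, map_zero])
  have hvtR : v (algebraMap K Ω t ^ R) = ((-(R:ℚ) : ℚ) : WithTop ℚ) := by
    rw [v.map_pow, hvt, aux_nsmul_coe]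
    norm_num
  -- Part 1
  have part1 : (s / T) ^ (k+2) - s / T = s := by
    have key : s ^ (k+2) - s * T^(k+1) - s * T^(k+2) = 0 := by
      have h1 : s ^ (k+2) = s * s^(k+1) := by ring
      rw [h1, hs, ← hT]
      ring
    have hTq : T ^ (k+2) ≠ 0 := pow_ne_zero _ hT0
    have e : (s/T) * T = s := div_mul_cancel₀ s hT0
    have h2 : ((s/T)^(k+2) - s/T - s) * T^(k+2) = 0 := by
      calc ((s/T)^(k+2) - s/T - s) * T^(k+2)
          = ((s/T)*T)^(k+2) - ((s/T)*T)*T^(k+1) - s*T^(k+2) := by ring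
        _ = 0 := by rw [e]; exact key
    have h3 := (mul_eq_zero.mp h2).resolve_right hTq
    linear_combination h3
  -- valuation of any root of the equation
  have hroot : ∀ X : Ω, X ^ (k+2) + X ^ (k+1) = algebraMap K Ω t ^ R →
      X ≠ 0 ∧ v X = ((-(R:ℚ)/(k+2) : ℚ) : WithTop ℚ) := by
    intro X hX
    have hX0 : X ≠ 0 := by
      rintro rfl
      rw [zero_pow (by omega), zero_pow (by omega), add_zero] at hX
      exact pow_ne_zero R ht0 hX.symm
    obtain ⟨r, hr⟩ := WithTop.ne_top_iff_exists.mp (aux_vne_top v hX0)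
    refine ⟨hX0, ?_⟩
    have hrneg : r < 0 := by
      by_contra hge
      push_neg at hge
      have h1 : ((0:ℚ) : WithTop ℚ) ≤ v (X ^ (k+2) + X^(k+1)) := by
        apply v.map_le_add
        · rw [v.map_pow, ← hr, aux_nsmul_coe]
          exact_mod_cast mul_nonneg (by positivity) hge
        · rw [v.map_pow, ← hr, aux_nsmul_coe]
          exact_mod_cast mul_nonneg (by positivity) hge
      rw [hX, hvtR] at h1
      have : (0:ℚ) ≤ -(R:ℚ) := by exact_mod_cast h1
      have : (0:ℚ) < (R:ℚ) := by exact_mod_cast hR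
      linarith
    have hmain : v (X^(k+2) + X^(k+1)) = ((((k:ℚ)+2) * r : ℚ) : WithTop ℚ) := by
      rw [v.map_add_eq_of_lt_left]
      · rw [v.map_pow, ← hr, aux_nsmul_coe]
        apply WithTop.coe_eq_coe.mpr
        push_cast
        ring
      · rw [v.map_pow, v.map_pow, ← hr, aux_nsmul_coe, aux_nsmul_coe]
        apply WithTop.coe_lt_coe.mpr
        push_cast
        nlinarith
    rw [hX, hvtR] at hmain
    rw [← hr]
    apply WithTop.coe_eq_coe.mpr
    have hmain' : -(R:ℚ) = ((k:ℚ)+2) * r := WithTop.coe_eq_coe.mp hmain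
    have hk2 : ((k:ℚ)+2) ≠ 0 := by positivity
    field_simp
    push_cast
    linarith
  obtain ⟨-, hvT⟩ := hroot T hT
  -- degree / monicity of the defining polynomial
  have hdegf : (X ^ (k+2) + X ^ (k+1) - C (t ^ R) : K[X]).natDegree = k + 2 := by
    compute_degree!
  have hmonic : (X ^ (k+2) + X ^ (k+1) - C (t ^ R) : K[X]).Monic := by
    unfold Polynomial.Monic Polynomial.leadingCoeff
    rw [hdegf]
    compute_degree!
  have haevK : (Polynomial.aeval T) (X ^ (k+2) + X ^ (k+1) - C (t ^ R) : K[X]) = 0 := by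
    simp only [map_add, map_sub, map_pow, aeval_X, aeval_C]
    rw [← hT]
    ring
  have hint : IsIntegral K T := ⟨_, hmonic, by rwa [← aeval_def]⟩
  have hqcop : Nat.Coprime (k+2) R := by
    rw [hqk]
    exact Nat.Coprime.pow_left N ((Nat.Prime.coprime_iff_not_dvd hp).mpr hpR)
  have hcop : IsCoprime ((k+2 : ℕ) : ℤ) ((R : ℕ) : ℤ) := Nat.isCoprime_iff_coprime.mpr hqcop
  have hterm : ∀ (c : K) (i : ℕ), c ≠ 0 →
      ∃ z : ℤ, v (algebraMap K Ω c * T ^ i) = (((z : ℚ) - i * R / (k+2) : ℚ) : WithTop ℚ) := by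
    intro c i hc
    obtain ⟨z, hz⟩ := hvK c hc
    refine ⟨z, ?_⟩
    rw [v.map_mul, hz, v.map_pow, hvT, aux_nsmul_coe, ← WithTop.coe_add]
    apply WithTop.coe_eq_coe.mpr
    push_cast
    ring
  have hdistN : ∀ (ci cj : K) (i j : ℕ), ci ≠ 0 → cj ≠ 0 → i < k+2 → j < k+2 →
      v (algebraMap K Ω ci * T^i) = v (algebraMap K Ω cj * T^j) → i = j := by
    intro ci cj i j hci hcj hi hj hv2
    obtain ⟨zi, hzi⟩ := hterm ci i hci
    obtain ⟨zj, hzj⟩ := hterm cj j hcj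
    rw [hzi, hzj, WithTop.coe_eq_coe] at hv2
    have hk2 : ((k:ℚ)+2) ≠ 0 := by positivity
    have h3 : (((k+2:ℕ):ℤ):ℚ) * ((zi:ℚ) - (zj:ℚ)) = (((i:ℤ):ℚ) - ((j:ℤ):ℚ)) * ((R:ℤ):ℚ) := by
      push_cast
      field_simp at hv2
      linarith
    have hZ : ((k+2:ℕ):ℤ) * (zi - zj) = ((i:ℤ) - (j:ℤ)) * (R:ℤ) := by exact_mod_cast h3
    have hdvd : ((k+2:ℕ):ℤ) ∣ ((i:ℤ) - (j:ℤ)) * (R:ℤ) := ⟨zi - zj, hZ.symm⟩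
    have hdvd2 := hcop.dvd_of_dvd_mul_right hdvd
    have habs : (i:ℤ) - j = 0 := Int.eq_zero_of_abs_lt_dvd hdvd2 (by
      rw [abs_lt]
      constructor <;> push_cast <;> omega)
    omega
  have hzero : ∀ c : ℕ → K,
      (∑ i ∈ Finset.range (k+2), algebraMap K Ω (c i) * T ^ i) = 0 →
      ∀ i ∈ Finset.range (k+2), c i = 0 := by
    intro c hsum
    by_contra hcon
    push_neg at hcon
    obtain ⟨i, hi, hci⟩ := hcon
    set S := (Finset.range (k+2)).filter (fun i => c i ≠ 0) with hS
    have hsub : ∑ j ∈ S, algebraMap K Ω (c j) * T ^ j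
        = ∑ j ∈ Finset.range (k+2), algebraMap K Ω (c j) * T ^ j :=
      Finset.sum_filter_of_ne (by
        intro x hx hne0 hc0
        exact hne0 (by rw [hc0, map_zero, zero_mul]))
    obtain ⟨i₀, hi₀, hveq, -⟩ := aux_argmin v S _ ⟨i, Finset.mem_filter.mpr ⟨hi, hci⟩⟩
      (fun j hj => aux_vne_top v (mul_ne_zero ((_root_.map_ne_zero _).mpr (Finset.mem_filter.mp hj).2)
        (pow_ne_zero _ hT0)))
      (fun j hj j' hj' hvv => hdistN _ _ _ _ (Finset.mem_filter.mp hj).2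
        (Finset.mem_filter.mp hj').2 (Finset.mem_range.mp (Finset.mem_filter.mp hj).1)
        (Finset.mem_range.mp (Finset.mem_filter.mp hj').1) hvv)
    rw [hsub, hsum, v.map_zero] at hveq
    exact aux_vne_top v (mul_ne_zero ((_root_.map_ne_zero _).mpr (Finset.mem_filter.mp hi₀).2)
      (pow_ne_zero _ hT0)) hveq.symm
  have hdvdmin : minpoly K T ∣ (X ^ (k+2) + X ^ (k+1) - C (t ^ R) : K[X]) :=
    minpoly.dvd _ _ haevK
  have hdegmin : (minpoly K T).natDegree = k + 2 := by
    have hle : (minpoly K T).natDegree ≤ k + 2 :=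
      hdegf ▸ Polynomial.natDegree_le_of_dvd hdvdmin hmonic.ne_zero
    by_contra hne
    have hlt : (minpoly K T).natDegree < k + 2 := lt_of_le_of_ne hle hne
    have h0 := minpoly.aeval K T
    rw [Polynomial.aeval_eq_sum_range' hlt] at h0
    have h0' : (∑ i ∈ Finset.range (k+2), algebraMap K Ω ((minpoly K T).coeff i) * T ^ i) = 0 := by
      rw [← h0]
      exact Finset.sum_congr rfl (fun i _ => by rw [Algebra.smul_def])
    have hco := hzero _ h0' ((minpoly K T).natDegree) (Finset.mem_range.mpr hlt)
    rw [(minpoly.monic hint).coeff_natDegree] at hco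
    exact one_ne_zero hco
  refine ⟨part1, ?_, ?_, ?_⟩
  · -- Part 2 : separability
    haveI : CharP (adjoin K {s'}) p :=
      (algebraMap (adjoin K {s'}) Ω).charP (algebraMap (adjoin K {s'}) Ω).injective p
    rw [IntermediateField.isSeparable_adjoin_simple_iff_isSeparable]
    have hc0 : (algebraMap K (adjoin K {s'}) t) ^ R ≠ 0 :=
      pow_ne_zero _ ((_root_.map_ne_zero _).mpr htK)
    have hsep := aux_sep hp k N hN hqk ((algebraMap K (adjoin K {s'}) t) ^ R) hc0
    have haev : (Polynomial.aeval T)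
        (X ^ (k+2) + X ^ (k+1) - C ((algebraMap K (adjoin K {s'}) t) ^ R)
          : (adjoin K {s'})[X]) = 0 := by
      simp only [map_add, map_sub, map_pow, aeval_X, aeval_C]
      rw [← IsScalarTower.algebraMap_apply K (adjoin K {s'}) Ω, ← hT]
      ring
    exact hsep.of_dvd (minpoly.dvd _ _ haev)
  · -- Part 3 : degree
    rw [IntermediateField.adjoin.finrank hint, hdegmin]
  · -- Part 4
    intro σ hσ
    set pb : PowerBasis K ↥K⟮T⟯ := IntermediateField.adjoin.powerBasis hint with hpb
    set B : Ω := σ (AdjoinSimple.gen K T) with hBdef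
    have hTgenEq : (AdjoinSimple.gen K T)^(k+2) + (AdjoinSimple.gen K T)^(k+1)
        = algebraMap K K⟮T⟯ (t^R) := by
      apply Subtype.ext
      push_cast
      exact hT
    have hBroot : B^(k+2) + B^(k+1) = algebraMap K Ω t ^ R := by
      have h6 := congrArg σ hTgenEq
      rw [map_add, map_pow, map_pow, AlgHom.commutes, map_pow] at h6
      exact h6
    have hBT : B ≠ T := by
      intro hBTeq
      apply hσ
      apply pb.algHom_ext
      rw [hpb, IntermediateField.adjoin.powerBasis_gen]
      rw [← hBdef, hBTeq]
      rfl
    obtain ⟨hB0, hvB⟩ := hroot B hBroot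
    have hD0 : T - B ≠ 0 := sub_ne_zero.mpr (Ne.symm hBT)
    have hfrob : (T - B) ^ (k+2) = T^(k+2) - B^(k+2) := by
      rw [hqk]
      exact sub_pow_char_pow T B N
    have h1 : (T - B)^(k+2) = B^(k+1) - T^(k+1) := by
      rw [hfrob]
      linear_combination hT - hBroot
    have hkey : (T - B)^(k+1) * (1 + B) = T^(k+1) := by
      have h2 : (T - B) * ((T - B)^(k+1) * (1 + B) - T^(k+1)) = 0 := by
        linear_combination (1 + B) * h1 + hBroot - hT
      have h3 := (mul_eq_zero.mp h2).resolve_left hD0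
      linear_combination h3
    have hRk2 : -(R:ℚ)/((k:ℚ)+2) < 0 := by
      rw [neg_div]
      have : (0:ℚ) < (R:ℚ)/((k:ℚ)+2) := by positivity
      linarith
    have hv1B : v (1 + B) = ((-(R:ℚ)/((k:ℚ)+2) : ℚ) : WithTop ℚ) := by
      rw [v.map_add_eq_of_lt_right (by rw [v.map_one, hvB]; exact_mod_cast hRk2), hvB]
    have hk2 : ((k:ℚ)+2) ≠ 0 := by positivity
    have hk1 : ((k:ℚ)+1) ≠ 0 := by positivity
    set u : Ω := (T - B) / T with hu
    have hu0 : u ≠ 0 := div_ne_zero hD0 hT0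
    have hBu : B = T * (1 - u) := by
      rw [hu]
      field_simp
      ring
    have hkey2 : u^(k+1) * (1 + B) = 1 := by
      have h2 : u^(k+1) * T^(k+1) = (T - B)^(k+1) := by
        rw [hu, div_pow, div_mul_cancel₀]
        exact pow_ne_zero _ hT0
      have h3 : u^(k+1) * (1+B) * T^(k+1) = 1 * T^(k+1) := by
        rw [one_mul, show u^(k+1)*(1+B)*T^(k+1) = (u^(k+1)*T^(k+1))*(1+B) by ring, h2, hkey]
      exact mul_right_cancel₀ (pow_ne_zero _ hT0) h3
    set ε : ℚ := (R:ℚ)/(((k:ℚ)+2)*((k:ℚ)+1)) with hεdef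
    have hεpos : 0 < ε := by rw [hεdef]; positivity
    have hε : v u = ((ε : ℚ) : WithTop ℚ) := by
      obtain ⟨e, he⟩ := WithTop.ne_top_iff_exists.mp (aux_vne_top v hu0)
      have h5 := congrArg v hkey2
      rw [v.map_mul, v.map_pow, ← he, hv1B, aux_nsmul_coe, ← WithTop.coe_add, v.map_one,
        ← WithTop.coe_zero, WithTop.coe_eq_coe] at h5
      have he2 : e = ε := by
        rw [hεdef]
        field_simp at h5 ⊢
        ring_nf at h5 ⊢
        push_cast at h5
        linear_combination h5
      rw [← he, he2]
    have hvu0 : (0:WithTop ℚ) ≤ v u := by rw [hε]; exact_mod_cast hεpos.le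
    have hvnat : ∀ m : ℕ, (0:WithTop ℚ) ≤ v ((m:Ω)) := by
      intro m
      induction m with
      | zero => rw [Nat.cast_zero, v.map_zero]; exact le_top
      | succ m ih =>
          rw [Nat.cast_succ]
          exact v.map_le_add ih (by rw [v.map_one])
    have hvnat0 : ∀ m : ℕ, ¬ p ∣ m → v ((m:Ω)) = (0:WithTop ℚ) := by
      intro m hm
      have hne : ((m:Ω)) ≠ 0 := fun h => hm ((CharP.cast_eq_zero_iff Ω p m).mp h)
      have hfrob2 : ((m:Ω))^p = (m:Ω) := by
        have h1' : ((m : ZMod p))^p = (m : ZMod p) := ZMod.pow_card _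
        have h2' := congrArg (ZMod.castHom (dvd_refl p) Ω) h1'
        simp only [map_pow, map_natCast] at h2'
        exact h2'
      obtain ⟨r, hr⟩ := WithTop.ne_top_iff_exists.mp (aux_vne_top v hne)
      have h3' := congrArg v hfrob2
      rw [v.map_pow, ← hr, aux_nsmul_coe, WithTop.coe_eq_coe] at h3'
      have hp1 : (1:ℚ) < (p:ℚ) := by exact_mod_cast hp.one_lt
      have hr0 : r = 0 := by nlinarith
      rw [← hr, hr0]
      rfl
    have hbin : ∀ i : ℕ, ∃ g : Ω, (1 - u)^i = 1 - (i:Ω) * u + u^2 * g ∧ (0:WithTop ℚ) ≤ v g := by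
      intro i
      induction i with
      | zero => exact ⟨0, by norm_num, by rw [v.map_zero]; exact le_top⟩
      | succ i ih =>
          obtain ⟨g, hgeq, hgv⟩ := ih
          refine ⟨(i:Ω) + g - u * g, ?_, ?_⟩
          · rw [pow_succ, hgeq]
            push_cast
            ring
          · refine v.map_le_sub (v.map_le_add (hvnat i) hgv) ?_
            rw [v.map_mul]
            exact add_nonneg hvu0 hgv
    have hdiff_ge : ∀ i : ℕ, ((ε:ℚ) : WithTop ℚ) ≤ v ((1-u)^i - 1) := by
      intro i
      obtain ⟨g, hgeq, hgv⟩ := hbin i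
      have heq1 : (1-u)^i - 1 = (-(i:Ω)) * u + u * (u * g) := by rw [hgeq]; ring
      rw [heq1]
      refine v.map_le_add ?_ ?_
      · rw [v.map_mul, v.map_neg]
        calc ((ε:ℚ):WithTop ℚ) = 0 + ((ε:ℚ):WithTop ℚ) := (zero_add _).symm
        _ ≤ v ((i:Ω)) + v u := add_le_add (hvnat i) (le_of_eq hε.symm)
      · rw [v.map_mul]
        calc ((ε:ℚ):WithTop ℚ) = ((ε:ℚ):WithTop ℚ) + 0 := (add_zero _).symm
        _ ≤ v u + v (u * g) := add_le_add (le_of_eq hε.symm)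
            (by rw [v.map_mul]; exact add_nonneg hvu0 hgv)
    have hdiff_eq : ∀ i : ℕ, ¬ p ∣ i → v ((1-u)^i - 1) = ((ε:ℚ) : WithTop ℚ) := by
      intro i hi
      obtain ⟨g, hgeq, hgv⟩ := hbin i
      have heq2 : (1-u)^i - 1 = u * (-(i:Ω) + u * g) := by rw [hgeq]; ring
      have hvi : v (-(i:Ω) + u * g) = (0:WithTop ℚ) := by
        rw [v.map_add_eq_of_lt_left]
        · rw [v.map_neg]; exact hvnat0 i hi
        · rw [v.map_neg, hvnat0 i hi, v.map_mul]
          refine lt_of_lt_of_le (by exact_mod_cast hεpos : (0:WithTop ℚ) < ((ε:ℚ):WithTop ℚ)) ?_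
          calc ((ε:ℚ):WithTop ℚ) = ((ε:ℚ):WithTop ℚ) + 0 := (add_zero _).symm
          _ ≤ v u + v g := add_le_add (le_of_eq hε.symm) hgv
      rw [heq2, v.map_mul, hε, hvi, add_zero]
    have hτ : ((R:ℚ) / (((k+2:ℕ):ℚ) - 1) + 1) / ((k+2:ℕ):ℚ) = 1/((k:ℚ)+2) + ε := by
      rw [hεdef]
      push_cast
      rw [show (k:ℚ)+2-1 = (k:ℚ)+1 by ring]
      field_simp
      ring
    have hdim : pb.dim = k + 2 := by rw [hpb, IntermediateField.adjoin.powerBasis_dim, hdegmin]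
    have hfin : ∀ j : Fin pb.dim, (j:ℕ) < k + 2 := fun j => hdim ▸ j.isLt
    constructor
    · intro x hx
      set c : Fin pb.dim → K := fun i => pb.basis.repr x i with hc
      have hxrepr : x = ∑ i : Fin pb.dim, algebraMap K K⟮T⟯ (c i) * pb.gen ^ (i:ℕ) := by
        conv_lhs => rw [← pb.basis.sum_repr x]
        exact Finset.sum_congr rfl (fun i _ => by rw [pb.coe_basis, Algebra.smul_def])
      have hvalgen : K⟮T⟯.val pb.gen = T := by
        rw [hpb, IntermediateField.adjoin.powerBasis_gen]
        rfl
      have hxcoe : (x : Ω) = ∑ i : Fin pb.dim, algebraMap K Ω (c i) * T ^ (i:ℕ) := by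
        have h6 := congrArg (K⟮T⟯.val) hxrepr
        rw [map_sum] at h6
        rw [show ((x : K⟮T⟯) : Ω) = K⟮T⟯.val x from rfl, h6]
        exact Finset.sum_congr rfl (fun i _ => by rw [map_mul, map_pow, AlgHom.commutes, hvalgen])
      have hσgen : σ pb.gen = B := by
        rw [hpb, IntermediateField.adjoin.powerBasis_gen, hBdef]
      have hσx : σ x = ∑ i : Fin pb.dim, algebraMap K Ω (c i) * B ^ (i:ℕ) := by
        have h6 := congrArg σ hxrepr
        rw [map_sum] at h6
        rw [h6]
        exact Finset.sum_congr rfl (fun i _ => by rw [map_mul, map_pow, AlgHom.commutes, hσgen])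
      have hdiffsum : σ x - (x:Ω) = ∑ i : Fin pb.dim,
          (algebraMap K Ω (c i) * T ^ (i:ℕ)) * ((1-u)^(i:ℕ) - 1) := by
        rw [hσx, hxcoe, ← Finset.sum_sub_distrib]
        exact Finset.sum_congr rfl (fun i _ => by rw [hBu, mul_pow]; ring)
      set S2 := Finset.univ.filter (fun j : Fin pb.dim => c j ≠ 0) with hS2
      have htermge : ∀ i : Fin pb.dim, c i ≠ 0 →
          (0:WithTop ℚ) ≤ v (algebraMap K Ω (c i) * T^(i:ℕ)) := by
        intro i hci
        obtain ⟨i₀, hi₀, hveq, hmin⟩ := aux_argmin v S2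
          (fun j => algebraMap K Ω (c j) * T^(j:ℕ))
          ⟨i, Finset.mem_filter.mpr ⟨Finset.mem_univ _, hci⟩⟩
          (fun j hj => aux_vne_top v (mul_ne_zero
            ((_root_.map_ne_zero _).mpr (Finset.mem_filter.mp hj).2) (pow_ne_zero _ hT0)))
          (fun j hj j' hj' hvv => Fin.ext (hdistN _ _ _ _ (Finset.mem_filter.mp hj).2
            (Finset.mem_filter.mp hj').2 (hfin j) (hfin j') hvv))
        have hsum2 : ∑ j ∈ S2, algebraMap K Ω (c j) * T ^ (j:ℕ) = (x:Ω) := by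
          rw [hxcoe]
          exact Finset.sum_filter_of_ne
            (fun j _ hne0 hc0 => hne0 (by rw [hc0, map_zero, zero_mul]))
        calc (0:WithTop ℚ) ≤ v (x:Ω) := hx
        _ = v (algebraMap K Ω (c i₀) * T^((i₀:ℕ))) := by rw [← hsum2, hveq]
        _ ≤ _ := hmin i (Finset.mem_filter.mpr ⟨Finset.mem_univ _, hci⟩)
      have hterm1 : ∀ i : Fin pb.dim, c i ≠ 0 → 1 ≤ (i:ℕ) →
          ((1/((k:ℚ)+2) : ℚ) : WithTop ℚ) ≤ v (algebraMap K Ω (c i) * T^(i:ℕ)) := by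
        intro i hci hi1
        obtain ⟨z, hz⟩ := hterm (c i) (i:ℕ) hci
        have h0le := htermge i hci
        rw [hz] at h0le ⊢
        have h0le' : (0:ℚ) ≤ (z:ℚ) - (i:ℕ)*R/((k:ℚ)+2) := by exact_mod_cast h0le
        have hq0 : (0:ℚ) < ((k:ℚ)+2) := by positivity
        have hint0 : (0:ℤ) ≤ ((k+2:ℕ):ℤ) * z - ((i:ℕ):ℤ) * R := by
          have hident : ((z:ℚ) - (i:ℕ)*R/((k:ℚ)+2)) * ((k:ℚ)+2) = ((k:ℚ)+2)*z - (i:ℕ)*R := by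
            field_simp
          have h7 : (0:ℚ) ≤ ((((k+2:ℕ):ℤ) * z - ((i:ℕ):ℤ) * R : ℤ) : ℚ) := by
            push_cast
            nlinarith [mul_nonneg h0le' hq0.le, hident]
          exact_mod_cast h7
        have hne0 : ((k+2:ℕ):ℤ) * z - ((i:ℕ):ℤ) * R ≠ 0 := by
          intro h7
          have hdvd : ((k+2:ℕ):ℤ) ∣ (((i:ℕ):ℤ)) * R := ⟨z, by linarith⟩
          have h8 := hcop.dvd_of_dvd_mul_right hdvd
          have h9 := Int.le_of_dvd (by exact_mod_cast hi1) h8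
          have h10 := hfin i
          push_cast at h9
          omega
        have h1int : (1:ℤ) ≤ ((k+2:ℕ):ℤ) * z - ((i:ℕ):ℤ) * R := by omega
        have h1q : (1:ℚ) ≤ ((k:ℚ)+2) * z - (i:ℕ) * R := by
          have h1q' : ((1:ℤ):ℚ) ≤ (((((k+2:ℕ):ℤ) * z - ((i:ℕ):ℤ) * R) : ℤ) : ℚ) :=
            Int.cast_le.mpr h1int
          push_cast at h1q'
          linarith
        apply WithTop.coe_le_coe.mpr
        have heqq : (z:ℚ) - (i:ℕ)*R/((k:ℚ)+2) - 1/((k:ℚ)+2)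
            = (((k:ℚ)+2)*z - (i:ℕ)*R - 1)/((k:ℚ)+2) := by
          field_simp
        have hnn : (0:ℚ) ≤ (((k:ℚ)+2)*z - (i:ℕ)*R - 1)/((k:ℚ)+2) :=
          div_nonneg (by linarith) hq0.le
        linarith
      rw [hτ, hdiffsum]
      refine v.map_le_sum ?_
      intro i _
      by_cases hci : c i = 0
      · rw [hci, map_zero, zero_mul, zero_mul, v.map_zero]
        exact le_top
      by_cases hi0 : (i:ℕ) = 0
      · rw [hi0]
        simp only [pow_zero, sub_self, mul_zero, v.map_zero]
        exact le_top
      · rw [v.map_mul]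
        calc ((1/((k:ℚ)+2) + ε : ℚ) : WithTop ℚ)
            = ((1/((k:ℚ)+2) : ℚ) : WithTop ℚ) + ((ε:ℚ) : WithTop ℚ) := WithTop.coe_add _ _
        _ ≤ v (algebraMap K Ω (c i) * T^(i:ℕ)) + v ((1-u)^(i:ℕ) - 1) :=
            add_le_add (hterm1 i hci (by omega)) (hdiff_ge (i:ℕ))
    · -- equality attained
      haveI : NeZero (k+2) := ⟨by omega⟩
      set β : ZMod (k+2) := - ((R : ℕ) : ZMod (k+2))⁻¹ with hβ
      set n : ℕ := β.val with hn
      have hRunit : IsUnit ((R:ℕ) : ZMod (k+2)) := by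
        rw [ZMod.isUnit_iff_coprime]
        exact hqcop.symm
      have hmod : ((n * R + 1 : ℕ) : ZMod (k+2)) = 0 := by
        push_cast
        rw [hn, ZMod.natCast_rightInverse β, hβ]
        rw [neg_mul, ZMod.inv_mul_of_unit _ hRunit]
        ring
      have hdvd2 : (k+2) ∣ n*R + 1 := (ZMod.natCast_eq_zero_iff _ _).mp hmod
      set M : ℕ := (n*R+1)/(k+2) with hM
      have hMq : (k+2) * M = n*R+1 := Nat.mul_div_cancel' hdvd2
      have hn1 : 1 ≤ n := by
        rcases Nat.eq_zero_or_pos n with h | h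
        · exfalso; rw [h] at hMq; simp at hMq
        · exact h
      have hnlt : n < k + 2 := ZMod.val_lt β
      have hpn : ¬ p ∣ n := by
        intro hdvd3
        have hpq : p ∣ k + 2 := hqk ▸ dvd_pow_self p (by omega)
        have hh1 : p ∣ n*R + 1 := hpq.trans hdvd2
        have hh2 : p ∣ n*R := Dvd.dvd.mul_right hdvd3 R
        have hh3 := Nat.dvd_sub hh1 hh2
        rw [show n*R+1 - n*R = 1 by omega] at hh3
        have := Nat.le_of_dvd one_pos hh3
        omega
      set cK : K := (t^M)⁻¹ with hcK
      have hcK0 : cK ≠ 0 := inv_ne_zero (pow_ne_zero _ htK)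
      refine ⟨algebraMap K K⟮T⟯ cK * (AdjoinSimple.gen K T)^n, ?_, ?_⟩
      all_goals {
        have hπΩ : ((algebraMap K K⟮T⟯ cK * (AdjoinSimple.gen K T)^n : K⟮T⟯) : Ω)
            = algebraMap K Ω cK * T^n :=
          calc ((algebraMap K K⟮T⟯ cK * (AdjoinSimple.gen K T)^n : K⟮T⟯) : Ω)
              = K⟮T⟯.val (algebraMap K K⟮T⟯ cK * (AdjoinSimple.gen K T)^n) := rfl
          _ = K⟮T⟯.val (algebraMap K K⟮T⟯ cK) * (K⟮T⟯.val (AdjoinSimple.gen K T))^n := by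
              rw [map_mul, map_pow]
          _ = algebraMap K Ω cK * T^n := by rw [AlgHom.commutes]; rfl
        have hvcK : v (algebraMap K Ω cK) = ((M:ℚ) : WithTop ℚ) := by
          have hone : algebraMap K Ω cK * (algebraMap K Ω t)^M = 1 := by
            rw [hcK, map_inv₀, map_pow]
            exact inv_mul_cancel₀ (pow_ne_zero _ ht0)
          have h9 := congrArg v hone
          rw [v.map_mul, v.map_one] at h9
          obtain ⟨w, hw⟩ := WithTop.ne_top_iff_exists.mp
            (aux_vne_top v ((_root_.map_ne_zero (algebraMap K Ω)).mpr hcK0))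
          rw [← hw, v.map_pow, hvt, aux_nsmul_coe, ← WithTop.coe_add] at h9
          have h10 : w + (M:ℚ)*(-1) = 0 := by exact_mod_cast h9
          rw [← hw]
          apply WithTop.coe_eq_coe.mpr
          linarith
        have hMq' : ((k:ℚ)+2) * (M:ℚ) = (n:ℚ)*(R:ℚ)+1 := by exact_mod_cast hMq
        first
        | -- goal 1 : 0 ≤ v π
          (rw [hπΩ, v.map_mul, hvcK, v.map_pow, hvT, aux_nsmul_coe, ← WithTop.coe_add]
           have hval : (M:ℚ) + (n:ℚ)*(-(R:ℚ)/((k:ℚ)+2)) = 1/((k:ℚ)+2) := by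
             field_simp <;> linarith [hMq']
           rw [hval]
           exact_mod_cast (by positivity : (0:ℚ) ≤ 1/((k:ℚ)+2)))
        | -- goal 2 : equality
          (have hσπ : σ (algebraMap K K⟮T⟯ cK * (AdjoinSimple.gen K T)^n)
              = algebraMap K Ω cK * B^n := by
             rw [map_mul, map_pow, AlgHom.commutes] <;> rfl
           rw [hσπ, hπΩ]
           have hdiffπ : algebraMap K Ω cK * B^n - algebraMap K Ω cK * T^n
               = (algebraMap K Ω cK * T^n) * ((1-u)^n - 1) := by
             rw [hBu, mul_pow]; ring
           rw [hdiffπ, v.map_mul, hdiff_eq n hpn, v.map_mul, hvcK, v.map_pow, hvT,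
             aux_nsmul_coe, ← WithTop.coe_add, ← WithTop.coe_add, hτ]
           apply WithTop.coe_eq_coe.mpr
           have hval2 : (M:ℚ) + (n:ℚ)*(-(R:ℚ)/((k:ℚ)+2)) = 1/((k:ℚ)+2) := by
             field_simp <;> linarith [hMq']
           linarith [hval2])
      }
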